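/- If z is a vertex of S(n,k) (in bitstring form) whose cyclic block/gap structure has exactly p gaps (maximal cyclic runs of unmatched bits), then z is the first coordinate of exactly p connectors (z, y) and the second coordinate of exactly p connectors (x, z). -/
import Mathlib


/-- Cyclic right shift of a bitstring of length `n` by one position: `σ(x)_i = x_{i-1}`. -/
def shift {n : ℕ} (x : ZMod n → Bool) : ZMod n → Bool := fun i => x (i - 1)

/-- Cyclic left shift, i.e. `σ⁻¹`: `σ⁻¹(x)_i = x_{i+1}`. -/
def unshift {n : ℕ} (x : ZMod n → Bool) : ZMod n → Bool := fun i => x (i + 1)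

/-- A vertex of the Schrijver graph `S(n,k)` in bitstring form: a binary string of length `n`
with exactly `k` ones and no two ones cyclically adjacent. -/
def IsSchrijverVertex (n k : ℕ) (x : ZMod n → Bool) : Prop :=
  Set.ncard {i : ZMod n | x i = true} = k ∧ ∀ i : ZMod n, x i = true → x (i + 1) = false

/-- Adjacency in the (Schrijver/Kneser) graph: the sets of 1-positions are disjoint
(and the strings are distinct). -/
def SAdj {n : ℕ} (x y : ZMod n → Bool) : Prop :=
  x ≠ y ∧ ∀ i : ZMod n, ¬(x i = true ∧ y i = true)

/-- The necklace of `x`: the set of all cyclic shifts of `x`. -/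
def neck {n : ℕ} (x : ZMod n → Bool) : Set (ZMod n → Bool) :=
  {y | ∃ i : ℕ, shift^[i] x = y}

/-- `(x, y)` is a connector with the glider push at position `i`: `x` and `σ⁻¹(y)` agree
outside the three cyclically consecutive positions `i, i+1, i+2`, where `x` reads `1,0,–`
(with `i+2` unmatched in `x`) and `σ⁻¹(y)` reads `–,1,0` (with `i` unmatched in `σ⁻¹(y)`). -/
def ConnAt {n : ℕ} (i : ZMod n) (x y : ZMod n → Bool) : Prop :=
  x i = true ∧ x (i + 1) = false ∧ x (i + 2) = false ∧
  unshift y i = false ∧ unshift y (i - 1) = false ∧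
  unshift y (i + 1) = true ∧ unshift y (i + 2) = false ∧
  ∀ j : ZMod n, j ≠ i → j ≠ i + 1 → j ≠ i + 2 → x j = unshift y j

/-- `(x,y)` is a connector (at some position). -/
def Conn {n : ℕ} (x y : ZMod n → Bool) : Prop := ∃ i : ZMod n, ConnAt i x y

namespace ConnectorCount

variable {n : ℕ}

lemma one_ne (hn : 3 ≤ n) : (1 : ZMod n) ≠ 0 := by
  haveI : Fact (1 < n) := ⟨by omega⟩
  exact one_ne_zero

lemma two_ne (hn : 3 ≤ n) : (2 : ZMod n) ≠ 0 := by
  haveI : NeZero n := ⟨by omega⟩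
  have : ((2:ℕ) : ZMod n) ≠ 0 := by
    rw [Ne, ZMod.natCast_eq_zero_iff]
    intro h
    have := Nat.le_of_dvd (by norm_num) h
    omega
  simpa using this

/-- `z` with the one at position `i` moved to `i+1`. -/
def moveR (z : ZMod n → Bool) (i : ZMod n) : ZMod n → Bool :=
  fun j => if j = i then false else if j = i + 1 then true else z j

/-- The unique `x` with `Conn x z` at position `i`. -/
def xconn (z : ZMod n → Bool) (i : ZMod n) : ZMod n → Bool :=
  fun j => if j = i then true else if j = i + 1 then false else z (j + 1)

lemma unshift_shift (w : ZMod n → Bool) : unshift (shift w) = w := by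
  funext j; simp [shift, unshift]

lemma shift_unshift (w : ZMod n → Bool) : shift (unshift w) = w := by
  funext j; simp [shift, unshift]

lemma shift_ones (w : ZMod n → Bool) :
    {t : ZMod n | shift w t = true} = (fun s => s + 1) '' {t : ZMod n | w t = true} := by
  ext t
  simp only [Set.mem_setOf_eq, Set.mem_image, shift]
  constructor
  · intro h; exact ⟨t - 1, h, by ring⟩
  · rintro ⟨s, hs, rfl⟩
    rw [show s + 1 - 1 = s from by ring]; exact hs

section Y

variable {z : ZMod n → Bool} {i : ZMod n}

lemma moveR_ones (hn : 3 ≤ n) (hi : z i = true) :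
    {t : ZMod n | moveR z i t = true} = insert (i + 1) ({t : ZMod n | z t = true} \ {i}) := by
  ext t
  simp only [Set.mem_setOf_eq, Set.mem_insert_iff, Set.mem_diff, Set.mem_singleton_iff]
  unfold moveR
  split_ifs with h1 h2
  · subst h1
    constructor
    · intro h; exact absurd h (by simp)
    · rintro (h | ⟨-, h⟩)
      · exact absurd (show (1:ZMod n) = 0 by linear_combination -h) (one_ne hn)
      · exact absurd rfl h
  · subst h2; simp
  · simp [h1, h2]

lemma moveR_adj (hn : 3 ≤ n) (hadj : ∀ t : ZMod n, z t = true → z (t + 1) = false)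
    (hi2 : z (i + 2) = false) (s : ZMod n) (hs : moveR z i s = true) :
    moveR z i (s + 1) = false := by
  unfold moveR at hs ⊢
  by_cases h1 : s = i
  · rw [if_pos h1] at hs; exact absurd hs (by simp)
  by_cases h2 : s = i + 1
  · subst h2
    rw [if_neg (fun h => absurd (show (2:ZMod n) = 0 by linear_combination h) (two_ne hn)),
        if_neg (fun h => absurd (show (1:ZMod n) = 0 by linear_combination h) (one_ne hn))]
    rw [show i + 1 + 1 = i + 2 from by ring]; exact hi2
  · rw [if_neg h1, if_neg h2] at hs
    by_cases h3 : s + 1 = i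
    · rw [if_pos h3]
    by_cases h4 : s + 1 = i + 1
    · exact absurd (by linear_combination h4) h1
    · rw [if_neg h3, if_neg h4]; exact hadj s hs

lemma y_vertex {k : ℕ} (hn : 3 ≤ n) (hz : IsSchrijverVertex n k z)
    (hi : z i = true) (hi2 : z (i + 2) = false) :
    IsSchrijverVertex n k (shift (moveR z i)) := by
  obtain ⟨hcard, hadj⟩ := hz
  constructor
  · have hmem : i ∈ {t : ZMod n | z t = true} := hi
    have hnmem : i + 1 ∉ {t : ZMod n | z t = true} := by simp [hadj i hi]
    rw [shift_ones, Set.ncard_image_of_injective _ (add_left_injective 1),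
        moveR_ones hn hi, Set.ncard_exchange hnmem hmem, hcard]
  · intro t ht
    simp only [shift] at ht ⊢
    have h := moveR_adj hn hadj hi2 (t - 1) ht
    rw [show t - 1 + 1 = t from by ring] at h
    rw [show t + 1 - 1 = t from by ring]
    exact h

lemma connAt_y (hn : 3 ≤ n) (hadj : ∀ t : ZMod n, z t = true → z (t + 1) = false)
    (hi : z i = true) (hi2 : z (i + 2) = false) :
    ConnAt i z (shift (moveR z i)) := by
  have hu : unshift (shift (moveR z i)) = moveR z i := unshift_shift _
  have hzm1 : z (i - 1) = false := by
    by_contra hc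
    have h1 : z (i - 1) = true := by simpa using hc
    have h2 := hadj (i - 1) h1
    rw [show i - 1 + 1 = i from by ring, hi] at h2
    exact absurd h2 (by simp)
  refine ⟨hi, hadj i hi, hi2, ?_, ?_, ?_, ?_, ?_⟩
  · rw [hu]; simp [moveR]
  · rw [hu]; unfold moveR
    rw [if_neg (fun h => absurd (show (1:ZMod n) = 0 by linear_combination -h) (one_ne hn)),
        if_neg (fun h => absurd (show (2:ZMod n) = 0 by linear_combination -h) (two_ne hn))]
    exact hzm1
  · rw [hu]; unfold moveR
    rw [if_neg (fun h => absurd (show (1:ZMod n) = 0 by linear_combination h) (one_ne hn)),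
        if_pos rfl]
  · rw [hu]; unfold moveR
    rw [if_neg (fun h => absurd (show (2:ZMod n) = 0 by linear_combination h) (two_ne hn)),
        if_neg (fun h => absurd (show (1:ZMod n) = 0 by linear_combination h) (one_ne hn))]
    exact hi2
  · intro j hj1 hj2 _
    rw [hu]; unfold moveR
    rw [if_neg hj1, if_neg hj2]

lemma setY_eq {k : ℕ} (hn : 3 ≤ n) (hz : IsSchrijverVertex n k z) :
    {y : ZMod n → Bool | IsSchrijverVertex n k y ∧ Conn z y} =
      (fun i => shift (moveR z i)) '' {i : ZMod n | z i = true ∧ z (i + 2) = false} := by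
  have hadj := hz.2
  ext y
  simp only [Set.mem_setOf_eq, Set.mem_image]
  constructor
  · rintro ⟨_, j, h1, h2, h3, h4, h5, h6, h7, h8⟩
    refine ⟨j, ⟨h1, h3⟩, ?_⟩
    show shift (moveR z j) = y
    have hmu : moveR z j = unshift y := by
      funext t
      unfold moveR
      by_cases ht1 : t = j
      · subst ht1; rw [if_pos rfl]; exact h4.symm
      by_cases ht2 : t = j + 1
      · subst ht2; rw [if_neg ht1, if_pos rfl]; exact h6.symm
      by_cases ht3 : t = j + 2
      · subst ht3; rw [if_neg ht1, if_neg ht2]; exact h3.trans h7.symm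
      · rw [if_neg ht1, if_neg ht2]; exact h8 t ht1 ht2 ht3
    rw [hmu, shift_unshift]
  · rintro ⟨i, ⟨hi, hi2⟩, rfl⟩
    exact ⟨y_vertex hn hz hi hi2, i, connAt_y hn hadj hi hi2⟩

lemma injY (hadj : ∀ t : ZMod n, z t = true → z (t + 1) = false) :
    Set.InjOn (fun i => shift (moveR z i))
      {i : ZMod n | z i = true ∧ z (i + 2) = false} := by
  intro a ha b hb h
  have h' : moveR z a = moveR z b := by
    have := congrArg unshift h
    rwa [unshift_shift, unshift_shift] at this
  by_contra hab
  have h1 : moveR z b a = false := by rw [← h']; simp [moveR]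
  have h2 : moveR z b a = true := by
    unfold moveR
    rw [if_neg hab]
    by_cases hba : a = b + 1
    · rw [if_pos hba]
    · rw [if_neg hba]; exact ha.1
  rw [h1] at h2; exact absurd h2 (by simp)

end Y

section X

variable {z : ZMod n → Bool} {i : ZMod n}

lemma unshift_ones (z : ZMod n → Bool) :
    {t : ZMod n | z (t + 1) = true} = (fun s => s - 1) '' {t : ZMod n | z t = true} := by
  ext t
  simp only [Set.mem_setOf_eq, Set.mem_image]
  constructor
  · intro h; exact ⟨t + 1, h, by ring⟩
  · rintro ⟨s, hs, rfl⟩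
    rw [show s - 1 + 1 = s from by ring]; exact hs

lemma xconn_ones (hn : 3 ≤ n) (hi1 : z (i + 1) = false) :
    {t : ZMod n | xconn z i t = true} =
      insert i ({t : ZMod n | z (t + 1) = true} \ {i + 1}) := by
  ext t
  simp only [Set.mem_setOf_eq, Set.mem_insert_iff, Set.mem_diff, Set.mem_singleton_iff]
  unfold xconn
  split_ifs with h1 h2
  · subst h1; simp
  · subst h2
    constructor
    · intro h; exact absurd h (by simp)
    · rintro (h | ⟨-, h⟩)
      · exact absurd (show (1:ZMod n) = 0 by linear_combination h) (one_ne hn)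
      · exact absurd rfl h
  · simp [h1, h2]

lemma x_vertex {k : ℕ} (hn : 3 ≤ n) (hz : IsSchrijverVertex n k z)
    (hi0 : z i = false) (hi1 : z (i + 1) = false) (hi2 : z (i + 2) = true) :
    IsSchrijverVertex n k (xconn z i) := by
  obtain ⟨hcard, hadj⟩ := hz
  constructor
  · have hinj : Function.Injective (fun s : ZMod n => s - 1) :=
      fun a b h => by linear_combination h
    have hmem : i + 1 ∈ {t : ZMod n | z (t + 1) = true} := by
      simp only [Set.mem_setOf_eq]
      rw [show i + 1 + 1 = i + 2 from by ring]; exact hi2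
    have hnmem : i ∉ {t : ZMod n | z (t + 1) = true} := by
      simp [hi1]
    rw [xconn_ones hn hi1, Set.ncard_exchange hnmem hmem, unshift_ones,
        Set.ncard_image_of_injective _ hinj, hcard]
  · intro t ht
    unfold xconn at ht ⊢
    by_cases h1 : t = i
    · subst h1
      rw [if_neg (fun h => absurd (show (1:ZMod n) = 0 by linear_combination h) (one_ne hn)),
          if_pos rfl]
    by_cases h2 : t = i + 1
    · rw [if_neg h1, if_pos h2] at ht; exact absurd ht (by simp)
    · rw [if_neg h1, if_neg h2] at ht
      by_cases h3 : t + 1 = i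
      · rw [h3, hi0] at ht; exact absurd ht (by simp)
      by_cases h4 : t + 1 = i + 1
      · exact absurd (by linear_combination h4) h1
      · rw [if_neg h3, if_neg h4]
        rw [show t + 1 + 1 = t + 2 from by ring]
        have := hadj (t + 1) ht
        rwa [show t + 1 + 1 = t + 2 from by ring] at this

lemma connAt_x (hn : 3 ≤ n) (hadj : ∀ t : ZMod n, z t = true → z (t + 1) = false)
    (hi0 : z i = false) (hi1 : z (i + 1) = false) (hi2 : z (i + 2) = true) :
    ConnAt i (xconn z i) z := by
  have h3 : z (i + 2 + 1) = false := hadj (i + 2) hi2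
  have hne1 : (i + 1 : ZMod n) ≠ i :=
    fun h => absurd (show (1:ZMod n) = 0 by linear_combination h) (one_ne hn)
  have hne2 : (i + 2 : ZMod n) ≠ i :=
    fun h => absurd (show (2:ZMod n) = 0 by linear_combination h) (two_ne hn)
  have hne3 : (i + 2 : ZMod n) ≠ i + 1 :=
    fun h => absurd (show (1:ZMod n) = 0 by linear_combination h) (one_ne hn)
  refine ⟨?_, ?_, ?_, ?_, ?_, ?_, ?_, ?_⟩
  · simp [xconn]
  · unfold xconn; rw [if_neg hne1, if_pos rfl]
  · unfold xconn; rw [if_neg hne2, if_neg hne3]; exact h3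
  · simpa [unshift] using hi1
  · simp only [unshift]
    rw [show i - 1 + 1 = i from by ring]; exact hi0
  · simp only [unshift]
    rw [show i + 1 + 1 = i + 2 from by ring]; exact hi2
  · simpa [unshift] using h3
  · intro j hj1 hj2 _
    unfold xconn
    rw [if_neg hj1, if_neg hj2]; rfl

lemma setX_eq {k : ℕ} (hn : 3 ≤ n) (hz : IsSchrijverVertex n k z) :
    {x : ZMod n → Bool | IsSchrijverVertex n k x ∧ Conn x z} =
      xconn z '' {i : ZMod n | z i = false ∧ z (i + 1) = false ∧ z (i + 2) = true} := by
  have hadj := hz.2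
  ext x
  simp only [Set.mem_setOf_eq, Set.mem_image]
  constructor
  · rintro ⟨_, j, h1, h2, h3, h4, h5, h6, h7, h8⟩
    have hz0 : z j = false := by
      have := h5; simp only [unshift] at this
      rwa [show j - 1 + 1 = j from by ring] at this
    have hz1 : z (j + 1) = false := by simpa [unshift] using h4
    have hz2 : z (j + 2) = true := by
      have := h6; simp only [unshift] at this
      rwa [show j + 1 + 1 = j + 2 from by ring] at this
    refine ⟨j, ⟨hz0, hz1, hz2⟩, ?_⟩
    show xconn z j = x
    funext t
    unfold xconn
    by_cases ht1 : t = j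
    · subst ht1; rw [if_pos rfl]; exact h1.symm
    by_cases ht2 : t = j + 1
    · subst ht2; rw [if_neg ht1, if_pos rfl]; exact h2.symm
    by_cases ht3 : t = j + 2
    · subst ht3; rw [if_neg ht1, if_neg ht2, hadj (j + 2) hz2]
      exact h3.symm
    · rw [if_neg ht1, if_neg ht2]
      exact (h8 t ht1 ht2 ht3).symm
  · rintro ⟨i, ⟨hi0, hi1, hi2⟩, rfl⟩
    exact ⟨x_vertex hn hz hi0 hi1 hi2, i, connAt_x hn hadj hi0 hi1 hi2⟩

lemma injX (hn : 3 ≤ n) :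
    Set.InjOn (xconn z)
      {i : ZMod n | z i = false ∧ z (i + 1) = false ∧ z (i + 2) = true} := by
  intro a ha b hb h
  by_contra hab
  have h1 : xconn z a a = true := by simp [xconn]
  rw [h] at h1
  unfold xconn at h1
  by_cases hba : a = b + 1
  · rw [if_neg hab, if_pos hba] at h1; exact absurd h1 (by simp)
  · rw [if_neg hab, if_neg hba] at h1
    rw [ha.2.1] at h1; exact absurd h1 (by simp)

end X

end ConnectorCount

namespace ConnectorCount

variable {n : ℕ} {z : ZMod n → Bool}

lemma gap_eq (hadj : ∀ t : ZMod n, z t = true → z (t + 1) = false) :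
    {i : ZMod n | ¬(z i = true ∨ z (i - 1) = true) ∧ (z (i - 1) = true ∨ z (i - 2) = true)} =
      (fun t => t + 2) '' {i : ZMod n | z i = true ∧ z (i + 2) = false} := by
  ext j
  simp only [Set.mem_setOf_eq, Set.mem_image, not_or, Bool.not_eq_true]
  constructor
  · rintro ⟨⟨hj, hj1⟩, hor⟩
    have hj2 : z (j - 2) = true := by
      rcases hor with h | h
      · rw [hj1] at h; exact absurd h (by simp)
      · exact h
    refine ⟨j - 2, ⟨hj2, ?_⟩, by ring⟩
    rw [show j - 2 + 2 = j from by ring]; exact hj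
  · rintro ⟨t, ⟨ht, ht2⟩, rfl⟩
    have h1 : z (t + 2 - 1) = false := by
      rw [show t + 2 - 1 = t + 1 from by ring]; exact hadj t ht
    refine ⟨⟨ht2, h1⟩, Or.inr ?_⟩
    rw [show t + 2 - 2 = t from by ring]; exact ht

lemma cardB_eq_cardA (hn : 3 ≤ n) (hadj : ∀ t : ZMod n, z t = true → z (t + 1) = false) :
    Set.ncard {i : ZMod n | z i = false ∧ z (i + 1) = false ∧ z (i + 2) = true} =
      Set.ncard {i : ZMod n | z i = true ∧ z (i + 2) = false} := by
  haveI : NeZero n := ⟨by omega⟩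
  set S : Set (ZMod n) := {t | z t = true} with hS
  set C : Set (ZMod n) := {t | z t = true ∧ z (t + 2) = true} with hC
  set D : Set (ZMod n) := {t | z t = true ∧ z (t - 2) = true} with hD
  have hzm : ∀ t : ZMod n, z t = true → z (t - 1) = false := by
    intro t ht
    by_contra hc
    have h1 : z (t - 1) = true := by simpa using hc
    have h2 := hadj (t - 1) h1
    rw [show t - 1 + 1 = t from by ring, ht] at h2
    exact absurd h2 (by simp)
  have hDC : D = (fun t => t + 2) '' C := by
    ext j
    simp only [hD, hC, Set.mem_setOf_eq, Set.mem_image]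
    constructor
    · rintro ⟨hj, hj2⟩
      refine ⟨j - 2, ⟨hj2, ?_⟩, by ring⟩
      rw [show j - 2 + 2 = j from by ring]; exact hj
    · rintro ⟨t, ⟨ht, ht2⟩, rfl⟩
      refine ⟨ht2, ?_⟩
      rw [show t + 2 - 2 = t from by ring]; exact ht
  have hcardCD : C.ncard = D.ncard := by
    rw [hDC, Set.ncard_image_of_injective _ (add_left_injective (2 : ZMod n))]
  have hA : {i : ZMod n | z i = true ∧ z (i + 2) = false} = S \ C := by
    ext t
    simp only [hS, hC, Set.mem_setOf_eq, Set.mem_diff, not_and, Bool.not_eq_true]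
    constructor
    · rintro ⟨h1, h2⟩; exact ⟨h1, fun _ => h2⟩
    · rintro ⟨h1, h2⟩; exact ⟨h1, h2 h1⟩
  have hB' : {i : ZMod n | z i = true ∧ z (i - 2) = false} = S \ D := by
    ext t
    simp only [hS, hD, Set.mem_setOf_eq, Set.mem_diff, not_and, Bool.not_eq_true]
    constructor
    · rintro ⟨h1, h2⟩; exact ⟨h1, fun _ => h2⟩
    · rintro ⟨h1, h2⟩; exact ⟨h1, h2 h1⟩
  have hBB' : {i : ZMod n | z i = false ∧ z (i + 1) = false ∧ z (i + 2) = true} =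
      (fun t => t - 2) '' {i : ZMod n | z i = true ∧ z (i - 2) = false} := by
    ext j
    simp only [Set.mem_setOf_eq, Set.mem_image]
    constructor
    · rintro ⟨h0, h1, h2⟩
      refine ⟨j + 2, ⟨h2, ?_⟩, by ring⟩
      rw [show j + 2 - 2 = j from by ring]; exact h0
    · rintro ⟨t, ⟨ht, ht2⟩, rfl⟩
      refine ⟨ht2, ?_, ?_⟩
      · rw [show t - 2 + 1 = t - 1 from by ring]; exact hzm t ht
      · rw [show t - 2 + 2 = t from by ring]; exact ht
  have hinj2 : Function.Injective (fun t : ZMod n => t - 2) :=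
    fun a b h => by linear_combination h
  have hCS : C ⊆ S := fun t ht => ht.1
  have hDS : D ⊆ S := fun t ht => ht.1
  have e1 : (S \ C).ncard = S.ncard - C.ncard := Set.ncard_diff hCS (Set.toFinite C)
  have e2 : (S \ D).ncard = S.ncard - D.ncard := Set.ncard_diff hDS (Set.toFinite D)
  rw [hBB', Set.ncard_image_of_injective _ hinj2, hA, hB', e1, e2, hcardCD]

end ConnectorCount

/-- if a vertex `z` of `S(n,k)` has exactly `p` gaps (maximal cyclic runs of
unmatched positions, a position `i` being matched if `z_i = 1` or `z_{i-1} = 1`), then `z`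
is the first coordinate of exactly `p` connectors `(z,y)` and the second coordinate of
exactly `p` connectors `(x,z)`. -/
theorem connector_count_eq_gap_count (n k : ℕ) (hk : 1 ≤ k) (hn : 2 * k + 1 ≤ n)
    (z : ZMod n → Bool) (hz : IsSchrijverVertex n k z) (p : ℕ)
    (hp : Set.ncard {i : ZMod n |
        ¬(z i = true ∨ z (i - 1) = true) ∧ (z (i - 1) = true ∨ z (i - 2) = true)} = p) :
    Set.ncard {y : ZMod n → Bool | IsSchrijverVertex n k y ∧ Conn z y} = p ∧
    Set.ncard {x : ZMod n → Bool | IsSchrijverVertex n k x ∧ Conn x z} = p := by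
  have hn3 : 3 ≤ n := by omega
  have hadj := hz.2
  have hA : Set.ncard {i : ZMod n | z i = true ∧ z (i + 2) = false} = p := by
    rw [← hp, ConnectorCount.gap_eq hadj,
      Set.ncard_image_of_injective _ (add_left_injective (2 : ZMod n))]
  constructor
  · rw [ConnectorCount.setY_eq hn3 hz,
      Set.ncard_image_of_injOn (ConnectorCount.injY hadj), hA]
  · rw [ConnectorCount.setX_eq hn3 hz,
      Set.ncard_image_of_injOn (ConnectorCount.injX hn3),
      ConnectorCount.cardB_eq_cardA hn3 hadj, hA]
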